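/- Let n ≥ k ≥ 1. Suppose A, B ∈ ℂ^{n×n} are Hermitian, B is positive definite, with joint eigen-decomposition Uᴴ A U = diag(λ₁,…,λₙ), Uᴴ B U = Iₙ where U is invertible and λ₁ ≤ … ≤ λₙ, and suppose D ∈ ℂ^{k×k} is Hermitian with unitary eigen-decomposition Qᴴ D Q = diag(ω₁,…,ω_k) where the ω_i are strictly decreasing (ω₁ > ω₂ > … > ω_k), all nonzero, with ω_i > 0 for i ≤ ℓ and ω_i < 0 for i > ℓ. If X_opt ∈ ℂ^{n×k} satisfies X_optᴴ B X_opt = I_k and trace(D X_optᴴ A X_opt) = Σ_{i=1}^{ℓ} ω_i λ_i + Σ_{i=ℓ+1}^{k} ω_i λ_{i+n−k} (i.e., X_opt is a minimizer of trace(D Xᴴ A X) subject to Xᴴ B X = I_k), then (X_opt Q)ᴴ A (X_opt Q) = diag(λ₁, λ₂, …, λ_ℓ, λ_{n−k+ℓ+1}, …, λ_n). -/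

import Mathlib

open Matrix BigOperators
open scoped ComplexOrder

namespace TraceMinPaperAux

open Finset


lemma card_filter_lt {n : ℕ} (m : ℕ) (hm : m ≤ n) :
    ((Finset.univ : Finset (Fin n)).filter (fun t : Fin n => (t : ℕ) < m)).card = m := by
  classical
  have h : (Finset.univ : Finset (Fin n)).filter (fun t : Fin n => (t : ℕ) < m)
      = Finset.map (Fin.castLEEmb hm) Finset.univ := by
    ext t
    simp only [Finset.mem_filter, Finset.mem_univ, true_and, Finset.mem_map]
    constructor
    · intro ht; exact ⟨⟨(t : ℕ), ht⟩, by ext; rfl⟩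
    · rintro ⟨s, rfl⟩; simp [Fin.castLEEmb]
  rw [h, Finset.card_map, Finset.card_univ, Fintype.card_fin]

lemma card_filter_le {n : ℕ} (m : ℕ) (hm : m ≤ n) :
    ((Finset.univ : Finset (Fin n)).filter (fun t : Fin n => m ≤ (t : ℕ))).card = n - m := by
  classical
  have h : (Finset.univ : Finset (Fin n)).filter (fun t : Fin n => m ≤ (t : ℕ))
      = Finset.univ \ (Finset.univ.filter (fun t : Fin n => (t : ℕ) < m)) := by
    ext t; simp only [Finset.mem_filter, Finset.mem_univ, true_and, Finset.mem_sdiff]; omega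
  rw [h, Finset.card_sdiff_of_subset (Finset.filter_subset _ _), card_filter_lt m hm,
    Finset.card_univ, Fintype.card_fin]

/-- all-ones case : if the ρ sum to `n` then each is 1. -/
lemma rho_all_one {n : ℕ} (ρ : Fin n → ℝ) (h1 : ∀ t, ρ t ≤ 1)
    (hs : ∑ t, ρ t = n) : ∀ t, ρ t = 1 := by
  have hz : ∑ t : Fin n, (1 - ρ t) = 0 := by
    rw [Finset.sum_sub_distrib, hs]
    simp
  intro t
  have := (Finset.sum_eq_zero_iff_of_nonneg (fun t _ => by linarith [h1 t])).1 hz t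
    (Finset.mem_univ t)
  linarith

/-- Ky Fan lower bound, pivot version, with equality extraction. -/
lemma kyfan_low {n m : ℕ} (hm : m < n) (lam : Fin n → ℝ) (hlam : Monotone lam)
    (ρ : Fin n → ℝ) (h0 : ∀ t, 0 ≤ ρ t) (h1 : ∀ t, ρ t ≤ 1)
    (hs : ∑ t, ρ t = m) :
    (∑ t ∈ Finset.univ.filter (fun t : Fin n => (t : ℕ) < m), lam t) ≤ (∑ t, lam t * ρ t) ∧
    ((∑ t, lam t * ρ t) = (∑ t ∈ Finset.univ.filter (fun t : Fin n => (t : ℕ) < m), lam t) →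
      ∀ t : Fin n, lam t < lam ⟨m, hm⟩ → ρ t = 1) := by
  classical
  set c := lam ⟨m, hm⟩ with hc
  set χ : Fin n → ℝ := fun t => if (t : ℕ) < m then 1 else 0 with hχ
  have hχsum : ∑ t, χ t = m := by
    simp only [hχ]
    rw [Finset.sum_boole, card_filter_lt m hm.le]
  have hterm : ∀ t, 0 ≤ (lam t - c) * (ρ t - χ t) := by
    intro t
    by_cases ht : (t : ℕ) < m
    · have hle : lam t ≤ c := hlam (by simp [Fin.le_def]; omega)
      have h2 : ρ t - χ t ≤ 0 := by simp only [hχ, if_pos ht]; linarith [h1 t]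
      nlinarith
    · have hle : c ≤ lam t := hlam (by simp [Fin.le_def]; omega)
      have h2 : 0 ≤ ρ t - χ t := by simp only [hχ, if_neg ht]; linarith [h0 t]
      exact mul_nonneg (by linarith) h2
  have hlamχ : ∑ t, lam t * χ t
      = ∑ t ∈ Finset.univ.filter (fun t : Fin n => (t : ℕ) < m), lam t := by
    rw [Finset.sum_filter]
    refine Finset.sum_congr rfl (fun t _ => ?_)
    simp only [hχ]
    by_cases ht : (t : ℕ) < m
    · rw [if_pos ht, if_pos ht, mul_one]
    · rw [if_neg ht, if_neg ht, mul_zero]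
  have hsum : ∑ t, (lam t - c) * (ρ t - χ t)
      = (∑ t, lam t * ρ t)
        - ∑ t ∈ Finset.univ.filter (fun t : Fin n => (t : ℕ) < m), lam t := by
    have hexp : ∀ t : Fin n, (lam t - c) * (ρ t - χ t)
        = lam t * ρ t - lam t * χ t - c * ρ t + c * χ t := by intro t; ring
    rw [Finset.sum_congr rfl (fun t _ => hexp t)]
    simp only [Finset.sum_add_distrib, Finset.sum_sub_distrib, ← Finset.mul_sum, hs, hχsum,
      hlamχ]
    ring
  have hnn : 0 ≤ ∑ t, (lam t - c) * (ρ t - χ t) :=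
    Finset.sum_nonneg (fun t _ => hterm t)
  constructor
  · linarith
  · intro heq t hlt
    have hz : ∑ t, (lam t - c) * (ρ t - χ t) = 0 := by rw [hsum, heq]; ring
    have ht0 := (Finset.sum_eq_zero_iff_of_nonneg (fun t _ => hterm t)).1 hz t
      (Finset.mem_univ t)
    have hne : lam t - c ≠ 0 := by intro h; rw [hc] at hlt; linarith [sub_eq_zero.1 h]
    have hρχ : ρ t = χ t := by
      have := mul_eq_zero.1 ht0
      rcases this with h | h
      · exact absurd h hne
      · linarith [sub_eq_zero.1 h]
    have htm : (t : ℕ) < m := by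
      by_contra hcon
      have : c ≤ lam t := hlam (by simp [Fin.le_def]; omega)
      linarith
    rw [hρχ]; simp only [hχ]; rw [if_pos htm]

/-- Ky Fan lower bound inequality (allowing `m = n`). -/
lemma kyfan_low_le {n m : ℕ} (hm : m ≤ n) (lam : Fin n → ℝ) (hlam : Monotone lam)
    (ρ : Fin n → ℝ) (h0 : ∀ t, 0 ≤ ρ t) (h1 : ∀ t, ρ t ≤ 1)
    (hs : ∑ t, ρ t = m) :
    (∑ t ∈ Finset.univ.filter (fun t : Fin n => (t : ℕ) < m), lam t) ≤ ∑ t, lam t * ρ t := by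
  rcases lt_or_eq_of_le hm with h | h
  · exact (kyfan_low h lam hlam ρ h0 h1 hs).1
  · have hall : ∀ t, ρ t = 1 := rho_all_one ρ h1 (by rw [h] at hs; exact hs)
    have h2 : ∑ t, lam t * ρ t = ∑ t, lam t := by
      refine Finset.sum_congr rfl (fun t _ => ?_); rw [hall t, mul_one]
    have h3 : (Finset.univ : Finset (Fin n)).filter (fun t : Fin n => (t : ℕ) < m)
        = Finset.univ := by
      ext t
      simp only [Finset.mem_filter, Finset.mem_univ, true_and, iff_true]
      have := t.isLt; omega
    rw [h2, h3]

/-- Ky Fan upper bound, pivot version, with equality extraction. -/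
lemma kyfan_up {n m : ℕ} (hm : m < n) (lam : Fin n → ℝ) (hlam : Monotone lam)
    (ρ : Fin n → ℝ) (h0 : ∀ t, 0 ≤ ρ t) (h1 : ∀ t, ρ t ≤ 1)
    (hs : ∑ t, ρ t = m) :
    (∑ t, lam t * ρ t) ≤ (∑ t ∈ Finset.univ.filter (fun t : Fin n => n - m ≤ (t : ℕ)), lam t) ∧
    ((∑ t, lam t * ρ t) = (∑ t ∈ Finset.univ.filter (fun t : Fin n => n - m ≤ (t : ℕ)), lam t) →
      ∀ t : Fin n, lam ⟨n - m - 1, by omega⟩ < lam t → ρ t = 1) := by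
  classical
  set c := lam ⟨n - m - 1, by omega⟩ with hc
  set χ : Fin n → ℝ := fun t => if n - m ≤ (t : ℕ) then 1 else 0 with hχ
  have hχsum : ∑ t, χ t = m := by
    simp only [hχ]
    rw [Finset.sum_boole, card_filter_le (n - m) (by omega)]
    have : n - (n - m) = m := by omega
    rw [this]
  have hterm : ∀ t, 0 ≤ (lam t - c) * (χ t - ρ t) := by
    intro t
    by_cases ht : n - m ≤ (t : ℕ)
    · have hle : c ≤ lam t := hlam (by simp [Fin.le_def]; omega)
      have h2 : 0 ≤ χ t - ρ t := by simp only [hχ, if_pos ht]; linarith [h1 t]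
      exact mul_nonneg (by linarith) h2
    · have hle : lam t ≤ c := hlam (by simp [Fin.le_def]; omega)
      have h2 : χ t - ρ t ≤ 0 := by simp only [hχ, if_neg ht]; linarith [h0 t]
      nlinarith
  have hlamχ : ∑ t, lam t * χ t
      = ∑ t ∈ Finset.univ.filter (fun t : Fin n => n - m ≤ (t : ℕ)), lam t := by
    rw [Finset.sum_filter]
    refine Finset.sum_congr rfl (fun t _ => ?_)
    simp only [hχ]
    by_cases ht : n - m ≤ (t : ℕ)
    · rw [if_pos ht, if_pos ht, mul_one]
    · rw [if_neg ht, if_neg ht, mul_zero]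
  have hsum : ∑ t, (lam t - c) * (χ t - ρ t)
      = (∑ t ∈ Finset.univ.filter (fun t : Fin n => n - m ≤ (t : ℕ)), lam t)
        - ∑ t, lam t * ρ t := by
    have hexp : ∀ t : Fin n, (lam t - c) * (χ t - ρ t)
        = lam t * χ t - lam t * ρ t - c * χ t + c * ρ t := by intro t; ring
    rw [Finset.sum_congr rfl (fun t _ => hexp t)]
    simp only [Finset.sum_add_distrib, Finset.sum_sub_distrib, ← Finset.mul_sum, hs, hχsum,
      hlamχ]
    ring
  have hnn : 0 ≤ ∑ t, (lam t - c) * (χ t - ρ t) :=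
    Finset.sum_nonneg (fun t _ => hterm t)
  constructor
  · linarith
  · intro heq t hlt
    have hz : ∑ t, (lam t - c) * (χ t - ρ t) = 0 := by rw [hsum, heq]; ring
    have ht0 := (Finset.sum_eq_zero_iff_of_nonneg (fun t _ => hterm t)).1 hz t
      (Finset.mem_univ t)
    have hne : lam t - c ≠ 0 := by intro h; rw [hc] at hlt; linarith [sub_eq_zero.1 h]
    have hρχ : ρ t = χ t := by
      have := mul_eq_zero.1 ht0
      rcases this with h | h
      · exact absurd h hne
      · linarith [sub_eq_zero.1 h]
    have htm : n - m ≤ (t : ℕ) := by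
      by_contra hcon
      have : lam t ≤ c := hlam (by simp [Fin.le_def]; omega)
      rw [hc] at hlt; linarith
    rw [hρχ]; simp only [hχ]; rw [if_pos htm]

/-- Ky Fan upper bound inequality (allowing `m = n`). -/
lemma kyfan_up_le {n m : ℕ} (hm : m ≤ n) (lam : Fin n → ℝ) (hlam : Monotone lam)
    (ρ : Fin n → ℝ) (h0 : ∀ t, 0 ≤ ρ t) (h1 : ∀ t, ρ t ≤ 1)
    (hs : ∑ t, ρ t = m) :
    (∑ t, lam t * ρ t) ≤ ∑ t ∈ Finset.univ.filter (fun t : Fin n => n - m ≤ (t : ℕ)), lam t := by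
  rcases lt_or_eq_of_le hm with h | h
  · exact (kyfan_up h lam hlam ρ h0 h1 hs).1
  · have hall : ∀ t, ρ t = 1 := rho_all_one ρ h1 (by rw [h] at hs; exact hs)
    have h2 : ∑ t, lam t * ρ t = ∑ t, lam t := by
      refine Finset.sum_congr rfl (fun t _ => ?_); rw [hall t, mul_one]
    have h3 : (Finset.univ : Finset (Fin n)).filter (fun t : Fin n => n - m ≤ (t : ℕ))
        = Finset.univ := by
      ext t
      simp only [Finset.mem_filter, Finset.mem_univ, true_and, iff_true]
      omega
    rw [h2, h3]



/-- Abel summation positivity lemma: if `v` is positive and strictly decreasing on `[0,N)`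
and all partial sums of `u` on `[1,N]` are nonnegative, then `∑ v u ≥ 0`, with equality
forcing all partial sums to vanish. -/
lemma key_abel (N : ℕ) (v u : ℕ → ℝ)
    (hv : ∀ m, m + 1 < N → v (m + 1) < v m)
    (hvp : ∀ m, m < N → 0 < v m)
    (hσ : ∀ m, 1 ≤ m → m ≤ N → 0 ≤ ∑ i ∈ Finset.range m, u i) :
    0 ≤ ∑ i ∈ Finset.range N, v i * u i ∧
      ((∑ i ∈ Finset.range N, v i * u i) = 0 →
        ∀ m, m ≤ N → ∑ i ∈ Finset.range m, u i = 0) := by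
  rcases Nat.eq_zero_or_pos N with hN | hN
  · subst hN
    constructor
    · simp
    · intro _ m hm
      interval_cases m
      simp
  · have hbp := Finset.sum_range_by_parts v u N
    simp only [smul_eq_mul] at hbp
    have hterm : ∀ i ∈ Finset.range (N - 1),
        (v (i + 1) - v i) * ∑ j ∈ Finset.range (i + 1), u j ≤ 0 := by
      intro i hi
      rw [Finset.mem_range] at hi
      have h1 : v (i + 1) - v i < 0 := by have := hv i (by omega); linarith
      have h2 : 0 ≤ ∑ j ∈ Finset.range (i + 1), u j := hσ (i + 1) (by omega) (by omega)
      exact mul_nonpos_of_nonpos_of_nonneg (by linarith) h2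
    have hsum2 : ∑ i ∈ Finset.range (N - 1),
        (v (i + 1) - v i) * ∑ j ∈ Finset.range (i + 1), u j ≤ 0 :=
      Finset.sum_nonpos hterm
    have hfirst : 0 ≤ v (N - 1) * ∑ j ∈ Finset.range N, u j :=
      mul_nonneg (hvp (N - 1) (by omega)).le (hσ N (by omega) le_rfl)
    constructor
    · rw [hbp]; linarith
    · intro heq m hm
      rw [hbp] at heq
      have hz1 : v (N - 1) * ∑ j ∈ Finset.range N, u j = 0 := by linarith
      have hz2 : ∑ i ∈ Finset.range (N - 1),
          (v (i + 1) - v i) * ∑ j ∈ Finset.range (i + 1), u j = 0 := by linarith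
      have hσN : ∑ j ∈ Finset.range N, u j = 0 := by
        rcases mul_eq_zero.1 hz1 with h | h
        · exact absurd h (ne_of_gt (hvp (N - 1) (by omega)))
        · exact h
      have hterm0 : ∀ i ∈ Finset.range (N - 1),
          (v (i + 1) - v i) * ∑ j ∈ Finset.range (i + 1), u j = 0 := by
        intro i hi
        have hnn : ∀ i ∈ Finset.range (N - 1),
            0 ≤ -((v (i + 1) - v i) * ∑ j ∈ Finset.range (i + 1), u j) := by
          intro i hi; linarith [hterm i hi]
        have hzneg : ∑ i ∈ Finset.range (N - 1),
            -((v (i + 1) - v i) * ∑ j ∈ Finset.range (i + 1), u j) = 0 := by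
          rw [Finset.sum_neg_distrib, hz2, neg_zero]
        have := (Finset.sum_eq_zero_iff_of_nonneg hnn).1 hzneg i hi
        linarith
      rcases Nat.eq_zero_or_pos m with hm0 | hm1
      · subst hm0; simp
      · rcases eq_or_lt_of_le hm with hmN | hmN
        · rw [hmN]; exact hσN
        · have hi : m - 1 ∈ Finset.range (N - 1) := by rw [Finset.mem_range]; omega
          have := hterm0 (m - 1) hi
          have hm1' : m - 1 + 1 = m := by omega
          rw [hm1'] at this
          rcases mul_eq_zero.1 this with h | h
          · exfalso
            have := hv (m - 1) (by omega)
            rw [hm1'] at this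
            linarith [sub_eq_zero.1 h]
          · exact h

/-- bridge: a `range` sum of a `dite` equals a `Fin` filtered sum. -/
lemma sum_range_eq_filter {k : ℕ} (g : Fin k → ℝ) (m : ℕ) (hm : m ≤ k) :
    ∑ i ∈ Finset.range m, (if h : i < k then g ⟨i, h⟩ else 0)
      = ∑ i ∈ Finset.univ.filter (fun i : Fin k => (i : ℕ) < m), g i := by
  classical
  rw [Finset.sum_filter]
  have hpt : ∀ a : Fin k, (if (a : ℕ) < m then g a else 0)
      = (fun j => if h : j < k then (if j < m then g ⟨j, h⟩ else 0) else 0) (a : ℕ) := by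
    intro a
    show _ = if h : (a : ℕ) < k then (if (a : ℕ) < m then g ⟨(a : ℕ), h⟩ else 0) else 0
    rw [dif_pos a.isLt]
  rw [Finset.sum_congr rfl (fun a _ => hpt a),
    Fin.sum_univ_eq_sum_range (fun j => if h : j < k then (if j < m then g ⟨j, h⟩ else 0) else 0) k]
  rw [← Finset.sum_subset (Finset.range_subset_range.2 hm)]
  · refine Finset.sum_congr rfl (fun j hj => ?_)
    rw [Finset.mem_range] at hj
    rw [dif_pos (lt_of_lt_of_le hj hm), dif_pos (lt_of_lt_of_le hj hm), if_pos hj]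
  · intro j _ hj
    rw [Finset.mem_range] at hj
    by_cases hjk : j < k
    · rw [dif_pos hjk, if_neg hj]
    · rw [dif_neg hjk]

/-- bridge: an `Ico` sum of a `dite` equals a `Fin` filtered sum. -/
lemma sum_Ico_eq_filter {k : ℕ} (g : Fin k → ℝ) (m : ℕ) :
    ∑ i ∈ Finset.Ico m k, (if h : i < k then g ⟨i, h⟩ else 0)
      = ∑ i ∈ Finset.univ.filter (fun i : Fin k => m ≤ (i : ℕ)), g i := by
  classical
  rw [Finset.sum_filter]
  have hpt : ∀ a : Fin k, (if m ≤ (a : ℕ) then g a else 0)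
      = (fun j => if h : j < k then (if m ≤ j then g ⟨j, h⟩ else 0) else 0) (a : ℕ) := by
    intro a
    show _ = if h : (a : ℕ) < k then (if m ≤ (a : ℕ) then g ⟨(a : ℕ), h⟩ else 0) else 0
    rw [dif_pos a.isLt]
  rw [Finset.sum_congr rfl (fun a _ => hpt a),
    Fin.sum_univ_eq_sum_range
    (fun j => if h : j < k then (if m ≤ j then g ⟨j, h⟩ else 0) else 0) k]
  have hsub : Finset.Ico m k ⊆ Finset.range k := by
    intro j hj; rw [Finset.mem_Ico] at hj; rw [Finset.mem_range]; omega
  rw [← Finset.sum_subset hsub]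
  · refine Finset.sum_congr rfl (fun j hj => ?_)
    rw [Finset.mem_Ico] at hj
    rw [dif_pos hj.2, dif_pos hj.2, if_pos hj.1]
  · intro j hj hj2
    rw [Finset.mem_range] at hj
    rw [Finset.mem_Ico] at hj2
    rw [dif_pos hj, if_neg (by omega)]

/-- reflection: `∑_{j<m} f (k-1-j) = ∑_{i ∈ [k-m, k)} f i`. -/
lemma sum_reflect_Ico (f : ℕ → ℝ) (m k : ℕ) (hm : m ≤ k) :
    ∑ j ∈ Finset.range m, f (k - 1 - j) = ∑ i ∈ Finset.Ico (k - m) k, f i := by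
  rw [Finset.sum_Ico_eq_sum_range]
  have hkm : k - (k - m) = m := by omega
  rw [hkm]
  rw [← Finset.sum_range_reflect (fun j => f (k - m + j)) m]
  refine Finset.sum_congr rfl (fun j hj => ?_)
  rw [Finset.mem_range] at hj
  congr 1
  omega

/-- The core scalar lemma. -/
lemma core {n k ℓ : ℕ} (hk : 1 ≤ k) (hkn : k ≤ n) (hℓ : ℓ ≤ k)
    (lam : Fin n → ℝ) (hlam : Monotone lam)
    (ω : Fin k → ℝ) (hω : StrictAnti ω)
    (hωpos : ∀ i : Fin k, (i : ℕ) < ℓ → 0 < ω i)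
    (hωneg : ∀ i : Fin k, ℓ ≤ (i : ℕ) → ω i < 0)
    (μ : Fin k → ℝ)
    (hμlo : ∀ (i : Fin k), (i : ℕ) < ℓ → μ i = lam ⟨(i : ℕ), by have := i.isLt; omega⟩)
    (hμhi : ∀ (i : Fin k), ℓ ≤ (i : ℕ) →
      μ i = lam ⟨(i : ℕ) + n - k, by omega⟩)
    (P : Fin n → Fin k → ℝ)
    (hP : ∀ t i, 0 ≤ P t i)
    (hcol : ∀ i, ∑ t, P t i = 1)
    (hrow : ∀ t, ∑ i, P t i ≤ 1)
    (heq : ∑ i, ω i * (∑ t, lam t * P t i) = ∑ i, ω i * μ i) :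
    ∀ (t : Fin n) (i : Fin k), lam t ≠ μ i → P t i = 0 := by
  classical
  set s : ℕ → ℝ :=
    fun j => if h : j < k then (∑ t, lam t * P t ⟨j, h⟩) - μ ⟨j, h⟩ else 0 with hs_def
  -- ρ bounds, generic
  have hρ0 : ∀ (S : Finset (Fin k)) (t : Fin n), 0 ≤ ∑ i ∈ S, P t i :=
    fun S t => Finset.sum_nonneg (fun i _ => hP t i)
  have hρ1 : ∀ (S : Finset (Fin k)) (t : Fin n), ∑ i ∈ S, P t i ≤ 1 := by
    intro S t
    calc ∑ i ∈ S, P t i ≤ ∑ i, P t i :=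
          Finset.sum_le_sum_of_subset_of_nonneg (Finset.subset_univ S)
            (fun i _ _ => hP t i)
      _ ≤ 1 := hrow t
  -- head partial-sum identity
  have hAeq : ∀ m, m ≤ ℓ →
      ∑ j ∈ Finset.range m, s j
        = (∑ t, lam t * (∑ i ∈ Finset.univ.filter (fun i : Fin k => (i : ℕ) < m), P t i))
          - ∑ t ∈ Finset.univ.filter (fun t : Fin n => (t : ℕ) < m), lam t := by
    intro m hm
    have hmk : m ≤ k := le_trans hm hℓ
    have h1 : ∑ j ∈ Finset.range m, s j
        = ∑ i ∈ Finset.univ.filter (fun i : Fin k => (i : ℕ) < m),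
            ((∑ t, lam t * P t i) - μ i) :=
      sum_range_eq_filter (fun i : Fin k => (∑ t, lam t * P t i) - μ i) m hmk
    have h2 : ∑ i ∈ Finset.univ.filter (fun i : Fin k => (i : ℕ) < m),
          (∑ t, lam t * P t i)
        = ∑ t, lam t * (∑ i ∈ Finset.univ.filter (fun i : Fin k => (i : ℕ) < m), P t i) := by
      rw [Finset.sum_comm]
      exact Finset.sum_congr rfl (fun t _ => (Finset.mul_sum _ _ _).symm)
    have h3 : ∑ i ∈ Finset.univ.filter (fun i : Fin k => (i : ℕ) < m), μ i
        = ∑ t ∈ Finset.univ.filter (fun t : Fin n => (t : ℕ) < m), lam t := by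
      rw [← sum_range_eq_filter μ m hmk, ← sum_range_eq_filter lam m (le_trans hmk hkn)]
      refine Finset.sum_congr rfl (fun j hj => ?_)
      rw [Finset.mem_range] at hj
      have hjk : j < k := lt_of_lt_of_le hj hmk
      have hjn : j < n := lt_of_lt_of_le hjk hkn
      rw [dif_pos hjk, dif_pos hjn, hμlo ⟨j, hjk⟩ (lt_of_lt_of_le hj hm)]
    rw [h1, Finset.sum_sub_distrib, h2, h3]
  -- tail partial-sum identity
  have hBeq : ∀ m, ℓ ≤ m → m ≤ k →
      ∑ j ∈ Finset.Ico m k, s j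
        = (∑ t, lam t * (∑ i ∈ Finset.univ.filter (fun i : Fin k => m ≤ (i : ℕ)), P t i))
          - ∑ t ∈ Finset.univ.filter (fun t : Fin n => n - (k - m) ≤ (t : ℕ)), lam t := by
    intro m hml hmk
    have h1 : ∑ j ∈ Finset.Ico m k, s j
        = ∑ i ∈ Finset.univ.filter (fun i : Fin k => m ≤ (i : ℕ)),
            ((∑ t, lam t * P t i) - μ i) :=
      sum_Ico_eq_filter (fun i : Fin k => (∑ t, lam t * P t i) - μ i) m
    have h2 : ∑ i ∈ Finset.univ.filter (fun i : Fin k => m ≤ (i : ℕ)),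
          (∑ t, lam t * P t i)
        = ∑ t, lam t * (∑ i ∈ Finset.univ.filter (fun i : Fin k => m ≤ (i : ℕ)), P t i) := by
      rw [Finset.sum_comm]
      exact Finset.sum_congr rfl (fun t _ => (Finset.mul_sum _ _ _).symm)
    have h3 : ∑ i ∈ Finset.univ.filter (fun i : Fin k => m ≤ (i : ℕ)), μ i
        = ∑ t ∈ Finset.univ.filter (fun t : Fin n => n - (k - m) ≤ (t : ℕ)), lam t := by
      rw [← sum_Ico_eq_filter μ m]
      have hstep1 : ∑ j ∈ Finset.Ico m k, (if h : j < k then μ ⟨j, h⟩ else 0)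
          = ∑ j ∈ Finset.Ico m k, (if h : j + n - k < n then lam ⟨j + n - k, h⟩ else 0) := by
        refine Finset.sum_congr rfl (fun j hj => ?_)
        rw [Finset.mem_Ico] at hj
        have hjk : j < k := hj.2
        have hjn : j + n - k < n := by omega
        rw [dif_pos hjk, dif_pos hjn, hμhi ⟨j, hjk⟩ (le_trans hml hj.1)]
      have hstep2 : ∑ j ∈ Finset.Ico m k, (if h : j + n - k < n then lam ⟨j + n - k, h⟩ else 0)
          = ∑ t ∈ Finset.Ico (m + n - k) n, (if h : t < n then lam ⟨t, h⟩ else 0) := by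
        rw [Finset.sum_Ico_eq_sum_range, Finset.sum_Ico_eq_sum_range]
        have hcount : n - (m + n - k) = k - m := by omega
        rw [hcount]
        refine Finset.sum_congr rfl (fun r hr => ?_)
        rw [Finset.mem_range] at hr
        have : m + r + n - k = m + n - k + r := by omega
        rw [this]
      have hstep3 : ∑ t ∈ Finset.Ico (m + n - k) n, (if h : t < n then lam ⟨t, h⟩ else 0)
          = ∑ t ∈ Finset.univ.filter (fun t : Fin n => m + n - k ≤ (t : ℕ)), lam t :=
        sum_Ico_eq_filter lam (m + n - k)
      have hstep4 : Finset.univ.filter (fun t : Fin n => m + n - k ≤ (t : ℕ))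
          = Finset.univ.filter (fun t : Fin n => n - (k - m) ≤ (t : ℕ)) := by
        ext t
        simp only [Finset.mem_filter, Finset.mem_univ, true_and]
        omega
      rw [hstep1, hstep2, hstep3, hstep4]
    rw [h1, Finset.sum_sub_distrib, h2, h3]
  -- head Ky Fan inequalities
  have hρsumA : ∀ m, m ≤ k →
      ∑ t, (∑ i ∈ Finset.univ.filter (fun i : Fin k => (i : ℕ) < m), P t i) = (m : ℝ) := by
    intro m hmk
    rw [Finset.sum_comm]
    rw [Finset.sum_congr rfl (fun i (_ : i ∈ Finset.univ.filter
      (fun i : Fin k => (i : ℕ) < m)) => hcol i)]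
    rw [Finset.sum_const, card_filter_lt m hmk]
    simp
  have hρsumB : ∀ m, m ≤ k →
      ∑ t, (∑ i ∈ Finset.univ.filter (fun i : Fin k => m ≤ (i : ℕ)), P t i)
        = ((k - m : ℕ) : ℝ) := by
    intro m hmk
    rw [Finset.sum_comm]
    rw [Finset.sum_congr rfl (fun i (_ : i ∈ Finset.univ.filter
      (fun i : Fin k => m ≤ (i : ℕ))) => hcol i)]
    rw [Finset.sum_const, card_filter_le m hmk]
    simp
  have hAok : ∀ m, m ≤ ℓ → 0 ≤ ∑ j ∈ Finset.range m, s j := by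
    intro m hm
    rw [hAeq m hm]
    have := kyfan_low_le (le_trans (le_trans hm hℓ) hkn) lam hlam
      (fun t => ∑ i ∈ Finset.univ.filter (fun i : Fin k => (i : ℕ) < m), P t i)
      (fun t => hρ0 _ t) (fun t => hρ1 _ t) (hρsumA m (le_trans hm hℓ))
    linarith
  have hBok : ∀ m, ℓ ≤ m → m ≤ k → ∑ j ∈ Finset.Ico m k, s j ≤ 0 := by
    intro m hml hmk
    rw [hBeq m hml hmk]
    have := kyfan_up_le (show k - m ≤ n by omega) lam hlam
      (fun t => ∑ i ∈ Finset.univ.filter (fun i : Fin k => m ≤ (i : ℕ)), P t i)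
      (fun t => hρ0 _ t) (fun t => hρ1 _ t) (hρsumB m hmk)
    linarith
  -- total is zero
  have htot : ∑ j ∈ Finset.range k, (if h : j < k then ω ⟨j, h⟩ else 0) * s j = 0 := by
    have hbr := Fin.sum_univ_eq_sum_range
      (fun j => (if h : j < k then ω ⟨j, h⟩ else 0) * s j) k
    rw [← hbr]
    have hpt : ∀ i : Fin k,
        (if h : (i : ℕ) < k then ω ⟨(i : ℕ), h⟩ else 0) * s (i : ℕ)
          = ω i * ((∑ t, lam t * P t i) - μ i) := by
      intro i
      rw [dif_pos i.isLt, hs_def]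
      simp only [dif_pos i.isLt]
    rw [Finset.sum_congr rfl (fun i _ => hpt i)]
    have : ∑ i : Fin k, ω i * ((∑ t, lam t * P t i) - μ i)
        = (∑ i, ω i * (∑ t, lam t * P t i)) - ∑ i, ω i * μ i := by
      rw [← Finset.sum_sub_distrib]
      exact Finset.sum_congr rfl (fun i _ => by ring)
    rw [this, heq, sub_self]
  -- abbreviation for the extended ω
  set vω : ℕ → ℝ := fun j => if h : j < k then ω ⟨j, h⟩ else 0 with hvω_def
  -- part 1 : Abel on [0, ℓ)
  have hKA1 := key_abel ℓ vω s
    (by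
      intro m hm1
      have hm1k : m + 1 < k := by omega
      simp only [hvω_def]
      rw [dif_pos hm1k, dif_pos (by omega : m < k)]
      exact hω (by simp [Fin.lt_def]))
    (by
      intro m hm1
      simp only [hvω_def]
      rw [dif_pos (by omega : m < k)]
      exact hωpos _ hm1)
    (fun m _ hm2 => hAok m hm2)
  -- part 2 : Abel on the reflected tail
  have hKA2 := key_abel (k - ℓ) (fun j => -vω (k - 1 - j)) (fun j => -s (k - 1 - j))
    (by
      intro m hm1
      have ha : k - 1 - (m + 1) < k := by omega
      have hb : k - 1 - m < k := by omega
      simp only [hvω_def]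
      rw [dif_pos ha, dif_pos hb]
      have : (⟨k - 1 - (m + 1), ha⟩ : Fin k) < ⟨k - 1 - m, hb⟩ := by
        simp [Fin.lt_def]; omega
      have := hω this
      linarith)
    (by
      intro m hm1
      have hb : k - 1 - m < k := by omega
      simp only [hvω_def]
      rw [dif_pos hb]
      have : ω ⟨k - 1 - m, hb⟩ < 0 := hωneg _ (by simp; omega)
      linarith)
    (by
      intro m hm1 hm2
      have hrefl : ∑ j ∈ Finset.range m, s (k - 1 - j)
          = ∑ i ∈ Finset.Ico (k - m) k, s i := sum_reflect_Ico s m k (by omega)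
      have : ∑ j ∈ Finset.range m, -s (k - 1 - j)
          = -∑ i ∈ Finset.Ico (k - m) k, s i := by
        rw [← hrefl, Finset.sum_neg_distrib]
      rw [this]
      have := hBok (k - m) (by omega) (by omega)
      linarith)
  -- split the total
  have hsplit : (∑ j ∈ Finset.range ℓ, vω j * s j) + ∑ j ∈ Finset.Ico ℓ k, vω j * s j
      = ∑ j ∈ Finset.range k, vω j * s j :=
    Finset.sum_range_add_sum_Ico _ hℓ
  have hP2refl : ∑ j ∈ Finset.range (k - ℓ), (-vω (k - 1 - j)) * (-s (k - 1 - j))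
      = ∑ j ∈ Finset.Ico ℓ k, vω j * s j := by
    have h1 : ∀ j, (-vω (k - 1 - j)) * (-s (k - 1 - j)) = vω (k - 1 - j) * s (k - 1 - j) := by
      intro j; ring
    rw [Finset.sum_congr rfl (fun j _ => h1 j)]
    have h2 := sum_reflect_Ico (fun j => vω j * s j) (k - ℓ) k (by omega)
    have h3 : k - (k - ℓ) = ℓ := by omega
    rw [h3] at h2
    exact h2
  have hP1z : ∑ j ∈ Finset.range ℓ, vω j * s j = 0 := by
    have h2 := hKA2.1
    rw [hP2refl] at h2
    have h1 := hKA1.1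
    rw [htot] at hsplit
    linarith
  have hP2z : ∑ j ∈ Finset.range (k - ℓ), (-vω (k - 1 - j)) * (-s (k - 1 - j)) = 0 := by
    rw [hP2refl]
    have h1 := hKA1.1
    rw [htot] at hsplit
    linarith
  -- extraction of vanishing partial sums
  have hAz : ∀ m, m ≤ ℓ → ∑ j ∈ Finset.range m, s j = 0 := hKA1.2 hP1z
  have hBz : ∀ m, ℓ ≤ m → m ≤ k → ∑ j ∈ Finset.Ico m k, s j = 0 := by
    intro m hml hmk
    have h1 := hKA2.2 hP2z (k - m) (by omega)
    have h2 : ∑ j ∈ Finset.range (k - m), -s (k - 1 - j)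
        = -∑ i ∈ Finset.Ico (k - (k - m)) k, s i := by
      rw [← sum_reflect_Ico s (k - m) k (by omega), Finset.sum_neg_distrib]
    have h3 : k - (k - m) = m := by omega
    rw [h3] at h2
    rw [h2] at h1
    linarith
  -- individual vanishing
  have hs0 : ∀ j, j < k → s j = 0 := by
    intro j hjk
    by_cases hjl : j < ℓ
    · have h1 := hAz j (by omega)
      have h2 := hAz (j + 1) (by omega)
      rw [Finset.sum_range_succ, h1] at h2
      linarith
    · have h1 := hBz j (by omega) (by omega)
      have h2 := hBz (j + 1) (by omega) (by omega)
      rw [Finset.sum_eq_sum_Ico_succ_bot hjk, h2] at h1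
      linarith
  have hfi : ∀ i : Fin k, (∑ t, lam t * P t i) = μ i := by
    intro i
    have := hs0 (i : ℕ) i.isLt
    simp only [hs_def, dif_pos i.isLt] at this
    linarith [this]
  -- final per-column argument
  intro t i hne
  by_cases hi : (i : ℕ) < ℓ
  · -- head column
    have hzero_lt : ∀ t' : Fin n, lam t' < μ i → P t' i = 0 := by
      intro t' ht'
      have hin : (i : ℕ) < n := by have := i.isLt; omega
      have hA := hAz (i : ℕ) (by omega)
      rw [hAeq (i : ℕ) (by omega)] at hA
      have hext := (kyfan_low hin lam hlam
        (fun t => ∑ j ∈ Finset.univ.filter (fun j : Fin k => (j : ℕ) < (i : ℕ)), P t j)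
        (fun t => hρ0 _ t) (fun t => hρ1 _ t) (hρsumA (i : ℕ) (by omega))).2
        (by linarith) t'
        (by rw [hμlo i hi] at ht'; exact ht')
      -- row squeeze
      have hnotmem : i ∉ Finset.univ.filter (fun j : Fin k => (j : ℕ) < (i : ℕ)) := by
        simp
      have hins : P t' i + ∑ j ∈ Finset.univ.filter
          (fun j : Fin k => (j : ℕ) < (i : ℕ)), P t' j
          = ∑ j ∈ insert i (Finset.univ.filter (fun j : Fin k => (j : ℕ) < (i : ℕ))), P t' j :=
        (Finset.sum_insert hnotmem).symm
      have hle : ∑ j ∈ insert i (Finset.univ.filter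
          (fun j : Fin k => (j : ℕ) < (i : ℕ))), P t' j ≤ 1 := by
        calc ∑ j ∈ insert i (Finset.univ.filter (fun j : Fin k => (j : ℕ) < (i : ℕ))), P t' j
            ≤ ∑ j, P t' j := Finset.sum_le_sum_of_subset_of_nonneg
              (Finset.subset_univ _) (fun j _ _ => hP t' j)
          _ ≤ 1 := hrow t'
      have := hP t' i
      rw [hext] at hins
      linarith
    have hsum0 : ∑ t' : Fin n, (lam t' - μ i) * P t' i = 0 := by
      have hexp : ∀ t' : Fin n, (lam t' - μ i) * P t' i
          = lam t' * P t' i - μ i * P t' i := by intro t'; ring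
      rw [Finset.sum_congr rfl (fun t' _ => hexp t'), Finset.sum_sub_distrib,
        ← Finset.mul_sum, hcol i, hfi i, mul_one, sub_self]
    have hterm : ∀ t' ∈ Finset.univ, 0 ≤ (lam t' - μ i) * P t' i := by
      intro t' _
      rcases lt_or_ge (lam t') (μ i) with h | h
      · rw [hzero_lt t' h, mul_zero]
      · exact mul_nonneg (by linarith) (hP t' i)
    have := (Finset.sum_eq_zero_iff_of_nonneg hterm).1 hsum0 t (Finset.mem_univ t)
    rcases mul_eq_zero.1 this with h | h
    · exact absurd (by linarith [sub_eq_zero.1 h] : lam t = μ i) hne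
    · exact h
  · -- tail column
    push_neg at hi
    have hzero_gt : ∀ t' : Fin n, μ i < lam t' → P t' i = 0 := by
      intro t' ht'
      have hik : (i : ℕ) + 1 ≤ k := i.isLt
      have hB := hBz ((i : ℕ) + 1) (by omega) hik
      rw [hBeq ((i : ℕ) + 1) (by omega) hik] at hB
      have hmn : k - ((i : ℕ) + 1) < n := by omega
      have hext := (kyfan_up hmn lam hlam
        (fun t => ∑ j ∈ Finset.univ.filter
          (fun j : Fin k => (i : ℕ) + 1 ≤ (j : ℕ)), P t j)
        (fun t => hρ0 _ t) (fun t => hρ1 _ t) (hρsumB ((i : ℕ) + 1) hik)).2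
        (by linarith) t'
        (by
          have hidx : (⟨n - (k - ((i : ℕ) + 1)) - 1, by omega⟩ : Fin n)
              = ⟨(i : ℕ) + n - k, by have := i.isLt; omega⟩ := by
            apply Fin.ext; simp; omega
          rw [hidx, ← hμhi i hi]
          exact ht')
      have hnotmem : i ∉ Finset.univ.filter
          (fun j : Fin k => (i : ℕ) + 1 ≤ (j : ℕ)) := by simp
      have hins : P t' i + ∑ j ∈ Finset.univ.filter
          (fun j : Fin k => (i : ℕ) + 1 ≤ (j : ℕ)), P t' j
          = ∑ j ∈ insert i (Finset.univ.filter
            (fun j : Fin k => (i : ℕ) + 1 ≤ (j : ℕ))), P t' j :=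
        (Finset.sum_insert hnotmem).symm
      have hle : ∑ j ∈ insert i (Finset.univ.filter
          (fun j : Fin k => (i : ℕ) + 1 ≤ (j : ℕ))), P t' j ≤ 1 := by
        calc ∑ j ∈ insert i (Finset.univ.filter
            (fun j : Fin k => (i : ℕ) + 1 ≤ (j : ℕ))), P t' j
            ≤ ∑ j, P t' j := Finset.sum_le_sum_of_subset_of_nonneg
              (Finset.subset_univ _) (fun j _ _ => hP t' j)
          _ ≤ 1 := hrow t'
      have := hP t' i
      rw [hext] at hins
      linarith
    have hsum0 : ∑ t' : Fin n, (μ i - lam t') * P t' i = 0 := by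
      have hexp : ∀ t' : Fin n, (μ i - lam t') * P t' i
          = μ i * P t' i - lam t' * P t' i := by intro t'; ring
      rw [Finset.sum_congr rfl (fun t' _ => hexp t'), Finset.sum_sub_distrib,
        ← Finset.mul_sum, hcol i, hfi i, mul_one, sub_self]
    have hterm : ∀ t' ∈ Finset.univ, 0 ≤ (μ i - lam t') * P t' i := by
      intro t' _
      rcases lt_or_ge (μ i) (lam t') with h | h
      · rw [hzero_gt t' h, mul_zero]
      · exact mul_nonneg (by linarith) (hP t' i)
    have := (Finset.sum_eq_zero_iff_of_nonneg hterm).1 hsum0 t (Finset.mem_univ t)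
    rcases mul_eq_zero.1 this with h | h
    · exact absurd (by linarith [sub_eq_zero.1 h] : lam t = μ i) hne
    · exact h

lemma conj_sandwich {n k : ℕ} (U Bm : Matrix (Fin n) (Fin n) ℂ)
    (W : Matrix (Fin n) (Fin k) ℂ) :
    (U * W)ᴴ * Bm * (U * W) = Wᴴ * (Uᴴ * Bm * U) * W := by
  rw [Matrix.conjTranspose_mul]
  simp only [Matrix.mul_assoc]


end TraceMinPaperAux

/-- Theorem 2.1(a) of the paper: with `D` nonsingular and with distinct eigenvalues,
any minimizer `X_opt` of `trace (D Xᴴ A X)` subject to `Xᴴ B X = I` satisfies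
`(X_opt Q)ᴴ A (X_opt Q) = diag(λ₁,…,λ_ℓ, λ_{n-k+ℓ+1},…,λ_n)`. -/
theorem trace_min_posdef_B_minimizer
    (n k ℓ : ℕ) (hk : 1 ≤ k) (hkn : k ≤ n) (hℓ : ℓ ≤ k)
    (A B : Matrix (Fin n) (Fin n) ℂ) (hA : A.IsHermitian) (hB : B.PosDef)
    (U : Matrix (Fin n) (Fin n) ℂ) (hU : IsUnit U)
    (lam : Fin n → ℝ) (hlam : Monotone lam)
    (hUA : Uᴴ * A * U = Matrix.diagonal fun i => (lam i : ℂ))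
    (hUB : Uᴴ * B * U = 1)
    (D : Matrix (Fin k) (Fin k) ℂ) (hD : D.IsHermitian)
    (Q : Matrix (Fin k) (Fin k) ℂ) (hQ : Qᴴ * Q = 1)
    (ω : Fin k → ℝ) (hω : StrictAnti ω)
    (hQD : Qᴴ * D * Q = Matrix.diagonal fun i => (ω i : ℂ))
    (hωpos : ∀ i : Fin k, (i : ℕ) < ℓ → 0 < ω i)
    (hωneg : ∀ i : Fin k, ℓ ≤ (i : ℕ) → ω i < 0)
    (Xopt : Matrix (Fin n) (Fin k) ℂ)
    (hXopt : Xoptᴴ * B * Xopt = 1)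
    (hmin : Matrix.trace (D * (Xoptᴴ * A * Xopt)) =
      ((∑ i : Fin k, ω i *
        (if (i : ℕ) < ℓ then lam (Fin.castLE hkn i)
         else lam ⟨(i : ℕ) + n - k, by have := i.isLt; omega⟩) : ℝ) : ℂ)) :
    (Xopt * Q)ᴴ * A * (Xopt * Q) =
      Matrix.diagonal fun i : Fin k =>
        ((if (i : ℕ) < ℓ then lam (Fin.castLE hkn i)
          else lam ⟨(i : ℕ) + n - k, by have := i.isLt; omega⟩ : ℝ) : ℂ) := by
  classical
  -- the target diagonal values
  set μ : Fin k → ℝ := fun i =>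
    if (i : ℕ) < ℓ then lam (Fin.castLE hkn i)
    else lam ⟨(i : ℕ) + n - k, by have := i.isLt; omega⟩ with hμ_def
  have hμlo : ∀ (i : Fin k), (i : ℕ) < ℓ →
      μ i = lam ⟨(i : ℕ), by have := i.isLt; omega⟩ := by
    intro i h
    simp only [hμ_def, if_pos h]
    congr 1
  have hμhi : ∀ (i : Fin k), ℓ ≤ (i : ℕ) →
      μ i = lam ⟨(i : ℕ) + n - k, by have := i.isLt; omega⟩ := by
    intro i h
    simp only [hμ_def, if_neg (not_lt.2 h)]
  -- basic matrix facts
  have hUdet : IsUnit U.det := (Matrix.isUnit_iff_isUnit_det U).mp hU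
  have hU1 : U * U⁻¹ = 1 := Matrix.mul_nonsing_inv U hUdet
  set W : Matrix (Fin n) (Fin k) ℂ := U⁻¹ * (Xopt * Q) with hW_def
  have hUW : U * W = Xopt * Q := by
    rw [hW_def, ← Matrix.mul_assoc, hU1, Matrix.one_mul]
  have hQQ : Q * Qᴴ = 1 := mul_eq_one_comm.mp hQ
  have hBXQ : (Xopt * Q)ᴴ * B * (Xopt * Q) = 1 := by
    rw [Matrix.conjTranspose_mul]
    calc Qᴴ * Xoptᴴ * B * (Xopt * Q) = Qᴴ * (Xoptᴴ * B * Xopt) * Q := by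
          simp only [Matrix.mul_assoc]
      _ = 1 := by rw [hXopt, Matrix.mul_one, hQ]
  have hWW : Wᴴ * W = 1 := by
    have h1 := TraceMinPaperAux.conj_sandwich U B W
    rw [hUW, hBXQ, hUB, Matrix.mul_one] at h1
    exact h1.symm
  have hY : (Xopt * Q)ᴴ * A * (Xopt * Q)
      = Wᴴ * (Uᴴ * A * U) * W := by
    have h1 := TraceMinPaperAux.conj_sandwich U A W
    rw [hUW] at h1
    exact h1
  rw [hUA] at hY
  -- trace reduction
  have hDform : D = Q * Matrix.diagonal (fun i => (ω i : ℂ)) * Qᴴ := by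
    rw [← hQD]
    rw [show Q * (Qᴴ * D * Q) * Qᴴ = (Q * Qᴴ) * D * (Q * Qᴴ) by simp only [Matrix.mul_assoc],
      hQQ, Matrix.one_mul, Matrix.mul_one]
  have htr : Matrix.trace (D * (Xoptᴴ * A * Xopt))
      = Matrix.trace (Matrix.diagonal (fun i => (ω i : ℂ))
          * ((Xopt * Q)ᴴ * A * (Xopt * Q))) := by
    have hYQ : (Xopt * Q)ᴴ * A * (Xopt * Q) = Qᴴ * (Xoptᴴ * A * Xopt) * Q := by
      rw [Matrix.conjTranspose_mul]; simp only [Matrix.mul_assoc]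
    have e1 : D * (Xoptᴴ * A * Xopt)
        = Q * (Matrix.diagonal (fun i => (ω i : ℂ)) * (Qᴴ * (Xoptᴴ * A * Xopt))) := by
      rw [hDform]; simp only [Matrix.mul_assoc]
    rw [e1, Matrix.trace_mul_comm]
    have e2 : Matrix.diagonal (fun i => (ω i : ℂ)) * (Qᴴ * (Xoptᴴ * A * Xopt)) * Q
        = Matrix.diagonal (fun i => (ω i : ℂ)) * ((Xopt * Q)ᴴ * A * (Xopt * Q)) := by
      rw [hYQ]; simp only [Matrix.mul_assoc]
    rw [e2]
  -- the real nonnegative weights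
  set P : Fin n → Fin k → ℝ := fun t i => Complex.normSq (W t i) with hP_def
  have hP : ∀ t i, 0 ≤ P t i := fun t i => Complex.normSq_nonneg _
  -- column sums
  have hWWentry : ∀ i j, (Wᴴ * W) i j = ∑ t, (starRingEnd ℂ) (W t i) * W t j := by
    intro i j
    simp [Matrix.mul_apply, Matrix.conjTranspose_apply]
  have hcol : ∀ i, ∑ t, P t i = 1 := by
    intro i
    have h1 : (Wᴴ * W) i i = 1 := by rw [hWW]; simp
    rw [hWWentry i i] at h1
    have h2 : ∀ t, (starRingEnd ℂ) (W t i) * W t i = ((P t i : ℝ) : ℂ) := by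
      intro t
      rw [hP_def]
      rw [mul_comm, Complex.mul_conj]
    rw [Finset.sum_congr rfl (fun t _ => h2 t)] at h1
    have h3 : ((∑ t, P t i : ℝ) : ℂ) = 1 := by push_cast at h1 ⊢; exact h1
    exact_mod_cast h3
  -- row sums
  have hrow : ∀ t, ∑ i, P t i ≤ 1 := by
    intro t
    set M : Matrix (Fin n) (Fin n) ℂ := W * Wᴴ with hM_def
    have hMM : M * M = M := by
      rw [hM_def, show W * Wᴴ * (W * Wᴴ) = W * ((Wᴴ * W) * Wᴴ) by
        simp only [Matrix.mul_assoc], hWW, Matrix.one_mul]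
    have hMH : Mᴴ = M := by
      rw [hM_def, Matrix.conjTranspose_mul, Matrix.conjTranspose_conjTranspose]
    have hMtt : M t t = ((∑ i, P t i : ℝ) : ℂ) := by
      rw [hM_def]
      simp only [Matrix.mul_apply, Matrix.conjTranspose_apply]
      rw [Complex.ofReal_sum]
      refine Finset.sum_congr rfl (fun i _ => ?_)
      rw [hP_def]
      exact Complex.mul_conj (W t i)
    have hMM_tt : M t t = ∑ s, ((Complex.normSq (M t s) : ℝ) : ℂ) := by
      conv_lhs => rw [← hMM]
      rw [Matrix.mul_apply]
      refine Finset.sum_congr rfl (fun ss _ => ?_)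
      have hconj : M ss t = (starRingEnd ℂ) (M t ss) := by
        conv_lhs => rw [← hMH]
        rfl
      rw [hconj]
      exact Complex.mul_conj (M t ss)
    have hreal : (∑ i, P t i) = ∑ s, Complex.normSq (M t s) := by
      have := hMtt.symm.trans hMM_tt
      push_cast at this
      exact_mod_cast this
    have hsingle : Complex.normSq (M t t) ≤ ∑ s, Complex.normSq (M t s) :=
      Finset.single_le_sum (fun s _ => Complex.normSq_nonneg (M t s)) (Finset.mem_univ t)
    have hMtt_sq : Complex.normSq (M t t) = (∑ i, P t i) ^ 2 := by
      rw [hMtt, Complex.normSq_ofReal]; ring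
    have h0 : 0 ≤ ∑ i, P t i := Finset.sum_nonneg (fun i _ => hP t i)
    nlinarith [hreal, hsingle, hMtt_sq]
  -- real form of the minimality hypothesis
  have hYentry : ∀ i j, ((Xopt * Q)ᴴ * A * (Xopt * Q)) i j
      = ∑ t, (starRingEnd ℂ) (W t i) * ((lam t : ℂ) * W t j) := by
    intro i j
    rw [hY, Matrix.mul_apply]
    refine Finset.sum_congr rfl (fun x _ => ?_)
    have h1 : (Wᴴ * Matrix.diagonal (fun r => (lam r : ℂ))) i x
        = (starRingEnd ℂ) (W x i) * (lam x : ℂ) := by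
      rw [Matrix.mul_diagonal, Matrix.conjTranspose_apply]
      rfl
    rw [h1, mul_assoc]
  have heqR : ∑ i, ω i * (∑ t, lam t * P t i) = ∑ i, ω i * μ i := by
    have h1 : Matrix.trace (Matrix.diagonal (fun i => (ω i : ℂ))
        * ((Xopt * Q)ᴴ * A * (Xopt * Q)))
        = ((∑ i, ω i * (∑ t, lam t * P t i) : ℝ) : ℂ) := by
      rw [Matrix.trace, Complex.ofReal_sum]
      refine Finset.sum_congr rfl (fun i _ => ?_)
      rw [Matrix.diag, Matrix.diagonal_mul, hYentry i i, Complex.ofReal_mul,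
        Complex.ofReal_sum, Finset.mul_sum, Finset.mul_sum]
      refine Finset.sum_congr rfl (fun t _ => ?_)
      rw [Complex.ofReal_mul]
      congr 1
      rw [hP_def,
        show (starRingEnd ℂ) (W t i) * ((lam t : ℂ) * W t i)
          = (lam t : ℂ) * (W t i * (starRingEnd ℂ) (W t i)) from by ring,
        Complex.mul_conj]
    have h2 := hmin
    rw [htr, h1] at h2
    have h3 : (∑ i, ω i * (∑ t, lam t * P t i)) = ∑ i : Fin k, ω i *
        (if (i : ℕ) < ℓ then lam (Fin.castLE hkn i)
         else lam ⟨(i : ℕ) + n - k, by have := i.isLt; omega⟩) := by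
      exact_mod_cast h2
    rw [h3]
  -- apply the core lemma
  have hcore := TraceMinPaperAux.core hk hkn hℓ lam hlam ω hω hωpos hωneg μ hμlo hμhi P hP hcol hrow heqR
  -- conclude
  have hWzero : ∀ (t : Fin n) (j : Fin k), lam t ≠ μ j → W t j = 0 := by
    intro t j h
    have := hcore t j h
    rw [hP_def] at this
    exact Complex.normSq_eq_zero.mp this
  rw [show (Matrix.diagonal fun i : Fin k =>
        ((if (i : ℕ) < ℓ then lam (Fin.castLE hkn i)
          else lam ⟨(i : ℕ) + n - k, by have := i.isLt; omega⟩ : ℝ) : ℂ))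
      = Matrix.diagonal (fun i => (μ i : ℂ)) from rfl]
  ext i j
  rw [hYentry i j]
  have hterm : ∀ t, (starRingEnd ℂ) (W t i) * ((lam t : ℂ) * W t j)
      = (μ j : ℂ) * ((starRingEnd ℂ) (W t i) * W t j) := by
    intro t
    by_cases h : lam t = μ j
    · rw [h]; ring
    · rw [hWzero t j h]; ring
  rw [Finset.sum_congr rfl (fun t _ => hterm t), ← Finset.mul_sum]
  rw [← hWWentry i j, hWW]
  by_cases hij : i = j
  · subst hij
    simp [Matrix.one_apply_eq, Matrix.diagonal_apply_eq]
  · simp [Matrix.one_apply_ne hij, Matrix.diagonal_apply_ne _ hij]
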